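/- Fix c ∈ (1, 4/3) and set φ₋ = 2c − 4/3 − (2/3)√(4 − 3c) and φ₊ = 2c − 4/3 + (2/3)√(4 − 3c). Then 4 ∫_0^{φ₋} φ(c − φ)/√((φ − φ₋)(φ − φ₊)) dφ = 16(c−1)√(c(c−1)) + (8/3)(c−1)(4−3c)·ln((3c − 2 + 3√(c(c−1)))/√(4 − 3c)). -/

import Mathlib

open Real

lemma alg16 (c x u s : ℝ) (hu : u ≠ 0) (hw : 2*c - 4/3 - x + u ≠ 0)
    (hu2 : u^2 = (x - (2*c - 4/3 - (2/3)*s)) * (x - (2*c - 4/3 + (2/3)*s)))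
    (hs2 : s^2 = 4 - 3*c) :
    x*(c-x)/u
      = -(1/2)*u
        + (2 - 2*c - x/2) * ((x - (2*c - 4/3 + (2/3)*s) + (x - (2*c - 4/3 - (2/3)*s))) / (2*u))
        + (2*c^2 - 14*c/3 + 8/3)
            * ((-1 + (x - (2*c - 4/3 + (2/3)*s) + (x - (2*c - 4/3 - (2/3)*s))) / (2*u))
              / (2*c - 4/3 - x + u)) := by
  have h1 : -1 + (x - (2*c - 4/3 + (2/3)*s) + (x - (2*c - 4/3 - (2/3)*s))) / (2*u)
      = -((2*c - 4/3 - x + u)/u) := by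
    field_simp
    ring
  rw [h1]
  have h2 : -((2*c - 4/3 - x + u)/u)/(2*c - 4/3 - x + u) = -(1/u) := by
    rw [neg_div, neg_inj, div_div, mul_comm u _, ← div_div, div_self hw]
  rw [h2]
  field_simp
  ring_nf
  linear_combination 6*hu2 - (8/3)*hs2

set_option maxHeartbeats 1000000 in
/-- Closed-form evaluation of the integral giving `Q(φ₀) = ∫ φ₀²` for the
smooth solitary wave of the Fornberg–Whitham equation with speed `c ∈ (1, 4/3)`
and zero background, with `φ₋ = 2c − 4/3 − (2/3)√(4 − 3c)` and
`φ₊ = 2c − 4/3 + (2/3)√(4 − 3c)`. -/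
theorem stmt16 (c : ℝ) (hc : c ∈ Set.Ioo (1:ℝ) (4/3)) :
    4 * ∫ φ in (0:ℝ)..(2*c - 4/3 - (2/3)*sqrt (4 - 3*c)),
        φ * (c - φ) / sqrt ((φ - (2*c - 4/3 - (2/3)*sqrt (4 - 3*c)))
          * (φ - (2*c - 4/3 + (2/3)*sqrt (4 - 3*c))))
      = 16*(c-1)*sqrt (c*(c-1))
        + (8/3)*(c-1)*(4-3*c)*log ((3*c - 2 + 3*sqrt (c*(c-1)))/sqrt (4 - 3*c)) := by
  obtain ⟨hc1, hc2⟩ := hc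
  have h4 : (0:ℝ) < 4 - 3*c := by linarith
  set s := Real.sqrt (4 - 3*c) with hs_def
  have hs_pos : 0 < s := Real.sqrt_pos.mpr h4
  have hs2 : s^2 = 4 - 3*c := Real.sq_sqrt h4.le
  have hs_lt : s < 3*c - 2 := by nlinarith [hs2, hs_pos]
  set a := 2*c - 4/3 - (2/3)*s with ha_def
  set b := 2*c - 4/3 + (2/3)*s with hb_def
  clear_value s a b
  have ha_pos : 0 < a := by rw [ha_def]; linarith
  have hab : a < b := by rw [ha_def, hb_def]; linarith
  have ham : a < 2*c - 4/3 := by rw [ha_def]; linarith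
  have hcc1 : 0 < c*(c-1) := by nlinarith
  have hr_pos : 0 < Real.sqrt (c*(c-1)) := Real.sqrt_pos.mpr hcc1
  have hprod : a*b = 4*(c*(c-1)) := by rw [ha_def, hb_def]; nlinarith [hs2]
  set F : ℝ → ℝ := fun φ => (2 - 2*c - φ/2) * Real.sqrt ((φ-a)*(φ-b))
      + (2*c^2 - 14*c/3 + 8/3) * Real.log (2*c - 4/3 - φ + Real.sqrt ((φ-a)*(φ-b)))
      with hF_def
  set G : ℝ → ℝ := fun φ => (φ*(c-φ)/Real.sqrt (b-φ)) * (a-φ) ^ (-(1/2):ℝ) with hG_def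
  -- pointwise identity between the original integrand and G on [0, a]
  have key : ∀ φ : ℝ, φ ≤ a →
      φ * (c - φ) / Real.sqrt ((φ - a) * (φ - b)) = G φ := by
    intro φ h1
    have haφ : 0 ≤ a - φ := by linarith
    have hQ : (φ - a) * (φ - b) = (a - φ) * (b - φ) := by ring
    rw [hG_def]
    simp only []
    rw [hQ, Real.sqrt_mul haφ, Real.rpow_neg haφ, ← Real.sqrt_eq_rpow]
    rw [mul_comm (Real.sqrt (a - φ)) (Real.sqrt (b - φ)), ← div_div, div_eq_mul_inv]
  have hEq : Set.EqOn (fun φ => φ * (c - φ) / Real.sqrt ((φ - a) * (φ - b))) G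
      (Set.uIcc 0 a) := by
    intro φ hφ
    rw [Set.uIcc_of_le ha_pos.le] at hφ
    exact key φ hφ.2
  -- integrability of G
  have hGint : IntervalIntegrable G MeasureTheory.volume 0 a := by
    have h1 : IntervalIntegrable (fun φ : ℝ => (a - φ) ^ (-(1/2):ℝ))
        MeasureTheory.volume 0 a := by
      have := (intervalIntegral.intervalIntegrable_rpow' (a := 0) (b := a)
        (by norm_num : (-1:ℝ) < -(1/2))).comp_sub_left a
      simpa using this.symm
    have h2 : ContinuousOn (fun φ : ℝ => φ*(c-φ)/Real.sqrt (b-φ)) (Set.uIcc 0 a) := by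
      apply ContinuousOn.div
      · fun_prop
      · fun_prop
      · intro x hx
        rw [Set.uIcc_of_le ha_pos.le] at hx
        exact Real.sqrt_ne_zero'.mpr (by linarith [hx.2])
    exact h1.continuousOn_mul h2
  -- continuity of F on [0, a]
  have hFcont : ContinuousOn F (Set.Icc 0 a) := by
    rw [hF_def]
    apply ContinuousOn.add
    · fun_prop
    · apply ContinuousOn.mul continuousOn_const
      apply ContinuousOn.log
      · fun_prop
      · intro x hx
        obtain ⟨hx1, hx2⟩ := hx
        have hsn := Real.sqrt_nonneg ((x-a)*(x-b))
        linarith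
  -- the derivative
  have hderiv : ∀ x ∈ Set.Ioo (0:ℝ) a, HasDerivAt F (G x) x := by
    intro x hx
    obtain ⟨hx0, hxa⟩ := hx
    have hax : 0 < a - x := by linarith
    have hbx : 0 < b - x := by linarith
    have hQx : 0 < (x-a)*(x-b) := by nlinarith [mul_pos hax hbx]
    have hu_pos : 0 < Real.sqrt ((x-a)*(x-b)) := Real.sqrt_pos.mpr hQx
    have hu2 : Real.sqrt ((x-a)*(x-b))^2 = (x-a)*(x-b) := Real.sq_sqrt hQx.le
    have harg : 0 < 2*c - 4/3 - x + Real.sqrt ((x-a)*(x-b)) := by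
      have hsn := Real.sqrt_nonneg ((x-a)*(x-b))
      linarith
    have hQd : HasDerivAt (fun φ : ℝ => (φ-a)*(φ-b)) ((x-b) + (x-a)) x := by
      have := ((hasDerivAt_id x).sub_const a).mul ((hasDerivAt_id x).sub_const b)
      exact this.congr_deriv (by simp only [id]; ring)
    have hsqd : HasDerivAt (fun φ : ℝ => Real.sqrt ((φ-a)*(φ-b)))
        (((x-b) + (x-a)) / (2 * Real.sqrt ((x-a)*(x-b)))) x :=
      hQd.sqrt hQx.ne'
    have hlind : HasDerivAt (fun φ : ℝ => 2 - 2*c - φ/2) (-(1/2)) x := by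
      simpa using ((hasDerivAt_id x).div_const 2).const_sub (2 - 2*c)
    have hargd : HasDerivAt (fun φ : ℝ => 2*c - 4/3 - φ + Real.sqrt ((φ-a)*(φ-b)))
        (-1 + ((x-b) + (x-a)) / (2 * Real.sqrt ((x-a)*(x-b)))) x :=
      (((hasDerivAt_id x).const_sub (2*c - 4/3)).add hsqd)
    have hF' := (hlind.mul hsqd).add
      ((hargd.log harg.ne').const_mul (2*c^2 - 14*c/3 + 8/3))
    rw [hF_def]
    refine hF'.congr_deriv ?_
    rw [(key x hxa.le).symm]
    set u := Real.sqrt ((x-a)*(x-b)) with hu_def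
    have hw : 2*c - 4/3 - x + u ≠ 0 := harg.ne'
    rw [ha_def, hb_def] at hu2 ⊢
    exact (alg16 c x u s hu_pos.ne' hw hu2 hs2).symm
  have hFTC := intervalIntegral.integral_eq_sub_of_hasDerivAt_of_le ha_pos.le
    hFcont hderiv hGint
  rw [intervalIntegral.integral_congr hEq, hFTC]
  -- evaluate F at the endpoints
  have hFa : F a = (2*c^2 - 14*c/3 + 8/3) * Real.log ((2/3)*s) := by
    simp only [hF_def]
    rw [show (a-a)*(a-b) = 0 by ring, Real.sqrt_zero,
      show 2*c - 4/3 - a + 0 = (2/3)*s by rw [ha_def]; ring]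
    ring
  have hF0 : F 0 = (2 - 2*c) * (2*Real.sqrt (c*(c-1)))
      + (2*c^2 - 14*c/3 + 8/3) * Real.log (2*c - 4/3 + 2*Real.sqrt (c*(c-1))) := by
    simp only [hF_def]
    rw [show ((0:ℝ)-a)*(0-b) = 2^2*(c*(c-1)) from by linear_combination hprod,
      Real.sqrt_mul (by norm_num : (0:ℝ) ≤ 2^2),
      Real.sqrt_sq (by norm_num : (0:ℝ) ≤ 2)]
    norm_num
  rw [hFa, hF0]
  have h1 : (0:ℝ) < (2/3)*s := by linarith
  have h2 : (0:ℝ) < 2*c - 4/3 + 2*Real.sqrt (c*(c-1)) := by linarith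
  have hLf : Real.log ((3*c - 2 + 3*Real.sqrt (c*(c-1)))/s)
      = Real.log (2*c - 4/3 + 2*Real.sqrt (c*(c-1))) - Real.log ((2/3)*s) := by
    rw [show (3*c - 2 + 3*Real.sqrt (c*(c-1)))/s
        = (2*c - 4/3 + 2*Real.sqrt (c*(c-1)))/((2/3)*s) from by
      field_simp
      ring]
    exact Real.log_div h2.ne' h1.ne'
  linear_combination (4*(2*c^2 - 14*c/3 + 8/3)) * hLf
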